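/- Let G be a finite bipartite simple graph (i.e., G admits a proper 2-coloring) and let q ≥ 2 be an integer. Then any two proper q-colorings of G are Kempe equivalent. -/

import Mathlib

/-- A proper `q`-coloring of a simple graph. -/
def IsProperColoring {V : Type*} (G : SimpleGraph V) {q : ℕ} (f : V → Fin q) : Prop :=
  ∀ ⦃u v : V⦄, G.Adj u v → f u ≠ f v

open Classical in
/-- A single Kempe change: interchange two colors `a ≠ b` on one connected
component of the subgraph induced on the vertices colored `a` or `b`. -/
def KempeStep {V : Type*} (G : SimpleGraph V) {q : ℕ} (f g : V → Fin q) : Prop :=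
  ∃ a b : Fin q, a ≠ b ∧
    ∃ C : (G.induce {v | f v = a ∨ f v = b}).ConnectedComponent,
      ∀ v : V,
        g v = if h : f v = a ∨ f v = b then
                if (G.induce {v | f v = a ∨ f v = b}).connectedComponentMk ⟨v, h⟩ = C
                then Equiv.swap a b (f v) else f v
              else f v

/-- Kempe equivalence: one coloring is obtained from the other by a finite
sequence of Kempe changes. -/
def KempeEquiv {V : Type*} (G : SimpleGraph V) {q : ℕ} (f g : V → Fin q) : Prop :=
  Relation.ReflTransGen (KempeStep G) f g

private lemma fin2_trans_ne {x y z : Fin 2} (h1 : x ≠ y) (h2 : y ≠ z) : x = z := by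
  fin_cases x <;> fin_cases y <;> fin_cases z <;> simp_all

private lemma swap_mem_pair {q : ℕ} {a b x : Fin q} (hx : x = a ∨ x = b) :
    Equiv.swap a b x = a ∨ Equiv.swap a b x = b := by
  rcases hx with rfl | rfl
  · right; exact Equiv.swap_apply_left _ _
  · left; exact Equiv.swap_apply_right _ _

private lemma reachable_congr {V : Type*} (G : SimpleGraph V) {S T : Set V} (hST : S = T)
    {u v : V} (hu : u ∈ S) (hv : v ∈ S) (hu' : u ∈ T) (hv' : v ∈ T) :
    (G.induce S).Reachable ⟨u, hu⟩ ⟨v, hv⟩ ↔ (G.induce T).Reachable ⟨u, hu'⟩ ⟨v, hv'⟩ := by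
  subst hST; rfl

open Classical in
private lemma kempeStep_symm {V : Type*} {G : SimpleGraph V} {q : ℕ} {f g : V → Fin q}
    (h : KempeStep G f g) : KempeStep G g f := by
  obtain ⟨a, b, hab, C, hC⟩ := h
  have hmem : ∀ v, (g v = a ∨ g v = b) ↔ (f v = a ∨ f v = b) := by
    intro v
    constructor
    · intro hv
      by_contra hfv
      rw [hC v, dif_neg hfv] at hv
      exact hfv hv
    · intro hv
      rw [hC v, dif_pos hv]
      split
      · exact swap_mem_pair hv
      · exact hv
  have hSeq : ({v | g v = a ∨ g v = b} : Set V) = {v | f v = a ∨ f v = b} :=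
    Set.ext fun v => hmem v
  obtain ⟨⟨x₀, hx₀f⟩, hx₀⟩ := C.exists_rep
  have hx₀g : g x₀ = a ∨ g x₀ = b := (hmem x₀).2 hx₀f
  refine ⟨a, b, hab,
    (G.induce {v | g v = a ∨ g v = b}).connectedComponentMk ⟨x₀, hx₀g⟩, fun v => ?_⟩
  by_cases hgv : g v = a ∨ g v = b
  · rw [dif_pos hgv]
    have hfv : f v = a ∨ f v = b := (hmem v).1 hgv
    have hiff : (G.induce {v | g v = a ∨ g v = b}).connectedComponentMk ⟨v, hgv⟩ =
        (G.induce {v | g v = a ∨ g v = b}).connectedComponentMk ⟨x₀, hx₀g⟩ ↔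
        (G.induce {v | f v = a ∨ f v = b}).connectedComponentMk ⟨v, hfv⟩ = C := by
      rw [← hx₀, SimpleGraph.ConnectedComponent.eq]
      exact (reachable_congr G hSeq hgv hx₀g hfv hx₀f).trans
        SimpleGraph.ConnectedComponent.eq.symm
    have hgval := hC v
    rw [dif_pos hfv] at hgval
    by_cases hcg : (G.induce {v | g v = a ∨ g v = b}).connectedComponentMk ⟨v, hgv⟩ =
        (G.induce {v | g v = a ∨ g v = b}).connectedComponentMk ⟨x₀, hx₀g⟩
    · rw [if_pos hcg]
      rw [if_pos (hiff.1 hcg)] at hgval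
      rw [hgval, Equiv.swap_apply_self]
    · rw [if_neg hcg]
      rw [if_neg (fun hh => hcg (hiff.2 hh))] at hgval
      exact hgval.symm
  · rw [dif_neg hgv]
    have hfv : ¬(f v = a ∨ f v = b) := fun hh => hgv ((hmem v).2 hh)
    have hgval := hC v
    rw [dif_neg hfv] at hgval
    exact hgval.symm

open Classical in
private lemma kempeEquiv_toTarget {V : Type*} [Fintype V] {G : SimpleGraph V} {q : ℕ}
    (hq : 2 ≤ q) (c : V → Fin 2) (hc : IsProperColoring G c) :
    ∀ (n : ℕ) (f : V → Fin q), IsProperColoring G f →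
      (Finset.univ.filter fun v => f v ≠ Fin.castLE hq (c v)).card ≤ n →
      KempeEquiv G f (fun v => Fin.castLE hq (c v)) := by
  intro n
  induction n with
  | zero =>
    intro f hf hcard
    have hempty : (Finset.univ.filter fun v => f v ≠ Fin.castLE hq (c v)) = ∅ :=
      Finset.card_eq_zero.mp (Nat.le_zero.mp hcard)
    have hfeq : f = fun v => Fin.castLE hq (c v) := by
      funext v
      by_contra hv
      have : v ∈ (Finset.univ.filter fun v => f v ≠ Fin.castLE hq (c v)) :=
        Finset.mem_filter.mpr ⟨Finset.mem_univ v, hv⟩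
      simp [hempty] at this
    rw [hfeq]
    exact Relation.ReflTransGen.refl
  | succ n ih =>
    intro f hf hcard
    by_cases hall : ∀ v, f v = Fin.castLE hq (c v)
    · have hfeq : f = fun v => Fin.castLE hq (c v) := funext hall
      rw [hfeq]
      exact Relation.ReflTransGen.refl
    · push_neg at hall
      obtain ⟨v₀, hv₀⟩ := hall
      set a := f v₀ with ha
      set b := Fin.castLE hq (c v₀) with hb
      have hab : a ≠ b := hv₀
      set S : Set V := {v | f v = a ∨ f v = b} with hS
      have hv₀S : v₀ ∈ S := Or.inl rfl
      set Gi := G.induce S with hGi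
      set C := Gi.connectedComponentMk ⟨v₀, hv₀S⟩ with hCdef
      set g : V → Fin q := fun v =>
        if h : f v = a ∨ f v = b then
          if Gi.connectedComponentMk ⟨v, h⟩ = C then Equiv.swap a b (f v) else f v
        else f v with hgdef
      have hstep : KempeStep G f g := ⟨a, b, hab, C, fun v => rfl⟩
      -- on the component of v₀, the color is determined by the bipartition side
      have key0 : ∀ (x y : ↥S) (w : Gi.Walk x y),
          ((f ↑y = a ∧ c ↑y = c v₀) ∨ (f ↑y = b ∧ c ↑y ≠ c v₀)) →
          ((f ↑x = a ∧ c ↑x = c v₀) ∨ (f ↑x = b ∧ c ↑x ≠ c v₀)) := by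
        intro x y w
        induction w with
        | nil => exact fun h => h
        | @cons u y _ hadj p ihw =>
          intro hend
          have ihw := ihw hend
          have hGadj : G.Adj ↑u ↑y := hadj
          have hfne : f ↑u ≠ f ↑y := hf hGadj
          have hcne : c ↑u ≠ c ↑y := hc hGadj
          have huS : f ↑u = a ∨ f ↑u = b := u.2
          rcases ihw with ⟨hfy, hcy⟩ | ⟨hfy, hcy⟩
          · right
            refine ⟨?_, fun hh => hcne (hh.trans hcy.symm)⟩
            rcases huS with h1 | h1
            · exact absurd (h1.trans hfy.symm) hfne
            · exact h1
          · left
            refine ⟨?_, fin2_trans_ne hcne hcy⟩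
            rcases huS with h1 | h1
            · exact h1
            · exact absurd (h1.trans hfy.symm) hfne
      have key : ∀ (x : ↥S) (w : Gi.Walk x ⟨v₀, hv₀S⟩),
          (f ↑x = a ∧ c ↑x = c v₀) ∨ (f ↑x = b ∧ c ↑x ≠ c v₀) := by
        intro x w
        exact key0 x ⟨v₀, hv₀S⟩ w (Or.inl ⟨rfl, rfl⟩)
      have compWrong : ∀ (u : V) (hu : u ∈ S),
          Gi.connectedComponentMk ⟨u, hu⟩ = C → f u ≠ Fin.castLE hq (c u) := by
        intro u hu hcomp heq
        have hr : Gi.Reachable ⟨u, hu⟩ ⟨v₀, hv₀S⟩ :=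
          (SimpleGraph.ConnectedComponent.eq).mp hcomp
        obtain ⟨w⟩ := hr
        rcases key ⟨u, hu⟩ w with ⟨h1, h2⟩ | ⟨h1, h2⟩
        · apply hab
          rw [← h1, heq, h2]
        · exact h2 (Fin.castLE_injective hq (heq.symm.trans (h1.trans hb)))
      have hgprop : IsProperColoring G g := by
        intro u w hadj
        have hfne := hf hadj
        by_cases hu : f u = a ∨ f u = b
        · by_cases hw : f w = a ∨ f w = b
          · have hadj' : Gi.Adj ⟨u, hu⟩ ⟨w, hw⟩ := hadj
            have hcc : Gi.connectedComponentMk ⟨u, hu⟩ = Gi.connectedComponentMk ⟨w, hw⟩ :=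
              SimpleGraph.ConnectedComponent.sound hadj'.reachable
            simp only [hgdef]
            rw [dif_pos hu, dif_pos hw, hcc]
            by_cases hcw : Gi.connectedComponentMk ⟨w, hw⟩ = C
            · rw [if_pos hcw, if_pos hcw]
              exact fun hh => hfne ((Equiv.swap a b).injective hh)
            · rw [if_neg hcw, if_neg hcw]; exact hfne
          · intro hgeq
            apply hw
            have hgw : g w = f w := by simp only [hgdef]; rw [dif_neg hw]
            have hgu : g u = a ∨ g u = b := by
              simp only [hgdef]; rw [dif_pos hu]
              split
              · exact swap_mem_pair hu
              · exact hu
            rw [← hgw, ← hgeq]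
            exact hgu
        · by_cases hw : f w = a ∨ f w = b
          · intro hgeq
            apply hu
            have hgu : g u = f u := by simp only [hgdef]; rw [dif_neg hu]
            have hgw : g w = a ∨ g w = b := by
              simp only [hgdef]; rw [dif_pos hw]
              split
              · exact swap_mem_pair hw
              · exact hw
            rw [← hgu, hgeq]
            exact hgw
          · have hgu : g u = f u := by simp only [hgdef]; rw [dif_neg hu]
            have hgw : g w = f w := by simp only [hgdef]; rw [dif_neg hw]
            rw [hgu, hgw]
            exact hfne
      have hsub : (Finset.univ.filter fun v => g v ≠ Fin.castLE hq (c v)) ⊂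
          (Finset.univ.filter fun v => f v ≠ Fin.castLE hq (c v)) := by
        constructor
        · intro u hu'
          rw [Finset.mem_filter] at hu' ⊢
          refine ⟨Finset.mem_univ u, fun heq => hu'.2 ?_⟩
          by_cases hu : f u = a ∨ f u = b
          · by_cases hcu : Gi.connectedComponentMk ⟨u, hu⟩ = C
            · exact absurd heq (compWrong u hu hcu)
            · simp only [hgdef]; rw [dif_pos hu, if_neg hcu]; exact heq
          · simp only [hgdef]; rw [dif_neg hu]; exact heq
        · intro hcon
          have hv₀mem : v₀ ∈ Finset.univ.filter fun v => f v ≠ Fin.castLE hq (c v) :=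
            Finset.mem_filter.mpr ⟨Finset.mem_univ _, hv₀⟩
          have hmem' := Finset.mem_filter.mp (hcon hv₀mem)
          apply hmem'.2
          have hv₀' : f v₀ = a ∨ f v₀ = b := hv₀S
          show (if h : f v₀ = a ∨ f v₀ = b then
              if Gi.connectedComponentMk ⟨v₀, h⟩ = C then Equiv.swap a b (f v₀) else f v₀
            else f v₀) = Fin.castLE hq (c v₀)
          rw [dif_pos hv₀', if_pos rfl, ← ha, Equiv.swap_apply_left]
      have hcard' : (Finset.univ.filter fun v => g v ≠ Fin.castLE hq (c v)).card ≤ n := by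
        have := Finset.card_lt_card hsub
        omega
      exact Relation.ReflTransGen.head hstep (ih g hgprop hcard')

/-- On a finite bipartite simple graph (i.e. one admitting a proper 2-coloring),
any two proper `q`-colorings (`q ≥ 2`) are Kempe equivalent. -/
theorem kempeEquiv_of_bipartite {V : Type*} [Fintype V] (G : SimpleGraph V)
    (hbip : ∃ c : V → Fin 2, IsProperColoring G c)
    (q : ℕ) (hq : 2 ≤ q) (f g : V → Fin q)
    (hf : IsProperColoring G f) (hg : IsProperColoring G g) :
    KempeEquiv G f g := by
  obtain ⟨c, hc⟩ := hbip
  have h1 := kempeEquiv_toTarget hq c hc _ f hf le_rfl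
  have h2 := kempeEquiv_toTarget hq c hc _ g hg le_rfl
  exact Relation.ReflTransGen.trans h1
    (by haveI : Std.Symm (KempeStep G (q := q)) := ⟨fun _ _ h => kempeStep_symm h⟩; exact Std.Symm.symm _ _ h2)
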